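/- Let F ∈ F^{M×n}, G ∈ F^{N×n}, and suppose there exists P ∈ F^{n×N} with F·P = 0 and rank(G·P) = N. Then rank([F;G]) = rank(F) + N. -/
import Mathlib

/-- Converse: existence of `P` with `F * P = 0` and `rank (G * P) = N`
implies the rank-increment condition `rank([F;G]) = rank(F) + N`. -/
theorem rank_increment_of_encoding_matrix
    {𝔽 : Type*} [Field 𝔽] {M N n : ℕ}
    (F : Matrix (Fin M) (Fin n) 𝔽) (G : Matrix (Fin N) (Fin n) 𝔽)
    (P : Matrix (Fin n) (Fin N) 𝔽)
    (hFP : F * P = 0) (hGP : (G * P).rank = N) :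
    (Matrix.fromRows F G).rank = F.rank + N := by
  classical
  set f := F.mulVecLin with hf
  set g := G.mulVecLin with hg
  -- kernel of the stacked matrix is the intersection of kernels
  have hker : LinearMap.ker (Matrix.fromRows F G).mulVecLin
      = LinearMap.ker f ⊓ LinearMap.ker g := by
    ext v
    simp only [LinearMap.mem_ker, Matrix.mulVecLin_apply, Submodule.mem_inf, hf, hg,
      Matrix.fromRows_mulVec, funext_iff, Sum.forall, Pi.zero_apply, Sum.elim_inl, Sum.elim_inr]
  -- restrict g to ker f
  set g' : (LinearMap.ker f) →ₗ[𝔽] (Fin N → 𝔽) := g.domRestrict (LinearMap.ker f) with hg'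
  have hkerg' : LinearMap.ker g' = Submodule.comap (LinearMap.ker f).subtype
      (LinearMap.ker f ⊓ LinearMap.ker g) := by
    rw [hg', LinearMap.ker_domRestrict]
    ext x
    simp [Submodule.mem_comap, x.2]
  have hcomapeq : Module.finrank 𝔽 (LinearMap.ker g')
      = Module.finrank 𝔽 ↥(LinearMap.ker f ⊓ LinearMap.ker g) := by
    rw [hkerg']
    exact LinearEquiv.finrank_eq (Submodule.comapSubtypeEquivOfLe inf_le_left)
  -- finrank of range g' is N
  have hrangeg' : Module.finrank 𝔽 (LinearMap.range g') = N := by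
    refine le_antisymm ?_ ?_
    · calc Module.finrank 𝔽 (LinearMap.range g')
          ≤ Module.finrank 𝔽 (Fin N → 𝔽) := Submodule.finrank_le _
        _ = N := by simp [Module.finrank_fintype_fun_eq_card]
    · have hle : LinearMap.range (G * P).mulVecLin ≤ LinearMap.range g' := by
        rw [Matrix.mulVecLin_mul]
        rintro x ⟨v, rfl⟩
        have hv : P.mulVecLin v ∈ LinearMap.ker f := by
          rw [hf, LinearMap.mem_ker]
          have : (F * P).mulVecLin v = 0 := by rw [hFP]; simp
          rwa [Matrix.mulVecLin_mul] at this
        exact ⟨⟨P.mulVecLin v, hv⟩, rfl⟩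
      calc N = (G * P).rank := hGP.symm
        _ = Module.finrank 𝔽 (LinearMap.range (G * P).mulVecLin) := rfl
        _ ≤ Module.finrank 𝔽 (LinearMap.range g') := Submodule.finrank_mono hle
  -- rank-nullity computations
  have h1 := LinearMap.finrank_range_add_finrank_ker (Matrix.fromRows F G).mulVecLin
  have h2 := LinearMap.finrank_range_add_finrank_ker f
  have h3 := LinearMap.finrank_range_add_finrank_ker g'
  rw [hrangeg', hcomapeq] at h3
  rw [hker] at h1
  have hFrank : F.rank = Module.finrank 𝔽 (LinearMap.range f) := rfl
  have hrank : (Matrix.fromRows F G).rank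
      = Module.finrank 𝔽 (LinearMap.range (Matrix.fromRows F G).mulVecLin) := rfl
  -- h1 : rank[F;G] + finrank (ker f ⊓ ker g) = finrank (Fin n → 𝔽)
  -- h2 : rank F + finrank (ker f) = finrank (Fin n → 𝔽)
  -- h3 : N + finrank (ker f ⊓ ker g) = finrank (ker f)
  rw [hrank, hFrank]
  omega
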